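/- The elementary cellular automaton with Wolfram number 28, i.e. the CA f on {0,1}^ℤ with f(x)_i = 1 if and only if (x_{i-1}, x_i, x_{i+1}) ∈ {(0,1,0), (0,1,1), (1,0,0)}, is not von Neumann regular in End({0,1}^ℤ). -/

import Mathlib

/-- The shift map on the full shift `A^ℤ`: `σ(x)_i = x_{i+1}`. -/
def shiftMap {A : Type*} (x : ℤ → A) : ℤ → A := fun i => x (i + 1)

/-- A cellular automaton on the full shift `A^ℤ` (with the product topology,
`A` discrete): a continuous map commuting with the shift. -/
def IsCA {A : Type*} [TopologicalSpace A] (f : (ℤ → A) → (ℤ → A)) : Prop :=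
  Continuous f ∧ ∀ x, f (shiftMap x) = shiftMap (f x)

/-- `f` is von Neumann regular in the monoid `End(A^ℤ)` of cellular automata:
there is a CA `h` with `f ∘ h ∘ f = f` and `h ∘ f ∘ h = h`. -/
def IsRegularCA {A : Type*} [TopologicalSpace A] (f : (ℤ → A) → (ℤ → A)) : Prop :=
  ∃ h : (ℤ → A) → (ℤ → A), IsCA h ∧ f ∘ h ∘ f = f ∧ h ∘ f ∘ h = h

/-- The elementary cellular automaton with Wolfram number 28 is not von
Neumann regular in End({0,1}^ℤ). Here 1 is represented by `true`. -/
theorem stmt12 (f : (ℤ → Bool) → (ℤ → Bool))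
    (hf : ∀ (x : ℤ → Bool) (i : ℤ), f x i = true ↔
      (x (i - 1), x i, x (i + 1)) = (false, true, false) ∨
      (x (i - 1), x i, x (i + 1)) = (false, true, true) ∨
      (x (i - 1), x i, x (i + 1)) = (true, false, false)) :
    ¬ IsRegularCA f := by
  rintro ⟨h, ⟨hcont, hcomm⟩, hfhf, -⟩
  -- Prop-level version of the rule
  have hf' : ∀ (x : ℤ → Bool) (i : ℤ), f x i = true ↔
      ((x (i-1) = false ∧ x i = true ∧ x (i+1) = false) ∨
       (x (i-1) = false ∧ x i = true ∧ x (i+1) = true) ∨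
       (x (i-1) = true ∧ x i = false ∧ x (i+1) = false)) := by
    intro x i
    rw [hf]
    simp [Prod.ext_iff]
  -- window version centered at j+1
  have hwin : ∀ (x : ℤ → Bool) (j : ℤ), f x (j+1) = true ↔
      ((x j = false ∧ x (j+1) = true ∧ x (j+2) = false) ∨
       (x j = false ∧ x (j+1) = true ∧ x (j+2) = true) ∨
       (x j = true ∧ x (j+1) = false ∧ x (j+2) = false)) := by
    intro x j
    have := hf' x (j+1)
    rw [show j+1-1 = j from by ring, show j+1+1 = j+2 from by ring] at this
    exact this
  -- the key configurations
  set xs : ℤ → Bool := fun i => decide (i = 0) with hxs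
  set y2 : ℤ → Bool := fun i => decide (i = 0 ∨ i = 1) with hy2
  set uu : ℤ → Bool := fun i => decide (i < 0) with huu
  -- f uu = xs
  have fu : f uu = xs := by
    funext i
    rw [Bool.eq_iff_iff, hf', hxs, huu]
    simp only [decide_eq_true_eq, decide_eq_false_iff_not, not_lt]
    omega
  -- f xs = y2
  have fx : f xs = y2 := by
    funext i
    rw [Bool.eq_iff_iff, hf', hxs, hy2]
    simp only [decide_eq_true_eq, decide_eq_false_iff_not]
    omega
  -- regularity consequences
  have fhx : f (h xs) = xs := by
    have := congrFun hfhf uu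
    simp only [Function.comp_apply] at this
    rw [fu] at this
    exact this
  have fhy : f (h y2) = y2 := by
    have := congrFun hfhf xs
    simp only [Function.comp_apply] at this
    rw [fx] at this
    exact this
  -- shift commutation for all integer shifts
  have hshift : ∀ (k : ℤ) (x : ℤ → Bool),
      h (fun j => x (j + k)) = fun j => h x (j + k) := by
    intro k
    induction k using Int.induction_on with
    | zero => intro x; simp
    | succ n ih =>
      intro x
      have e : (fun j => x (j + ((n:ℤ)+1))) = shiftMap (fun j => x (j + n)) := by
        funext j; simp only [shiftMap]; ring_nf
      rw [e, hcomm, ih]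
      funext j; simp only [shiftMap]; ring_nf
    | pred n ih =>
      intro x
      have e : (fun j => x (j + (-(n:ℤ)))) = shiftMap (fun j => x (j + (-(n:ℤ)-1))) := by
        funext j; simp only [shiftMap]; ring_nf
      have h2 := ih x
      rw [e, hcomm] at h2
      funext j
      have h3 := congrFun h2 (j - 1)
      simp only [shiftMap] at h3
      rw [show j-1+1 = j from by ring] at h3
      rw [show j-1+(-(n:ℤ)) = j + (-(n:ℤ)-1) from by ring] at h3
      exact h3
  -- continuity at the zero configuration
  set c : Bool := h (fun _ => false) 0 with hc
  have hopen : IsOpen ((fun z : ℤ → Bool => h z 0) ⁻¹' {c}) :=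
    ((continuous_apply (0:ℤ)).comp hcont).isOpen_preimage _ (isOpen_discrete _)
  have hmem : (fun _ => false) ∈ ((fun z : ℤ → Bool => h z 0) ⁻¹' {c}) := rfl
  obtain ⟨I, uSet, hIu, hsub⟩ := isOpen_pi_iff.mp hopen _ hmem
  have hball : ∀ z : ℤ → Bool, (∀ i ∈ I, z i = false) → h z 0 = c := by
    intro z hz
    exact hsub fun i hi => by rw [hz i hi]; exact (hIu i hi).2
  set B : ℤ := ((I.sup fun j => j.natAbs : ℕ) : ℤ) with hBdef
  have hBnn : 0 ≤ B := Int.ofNat_nonneg _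
  have hBbound : ∀ j ∈ I, (j.natAbs : ℤ) ≤ B := by
    intro j hj
    rw [hBdef]
    exact_mod_cast Finset.le_sup (f := fun j : ℤ => j.natAbs) hj
  -- tail lemma
  have tail : ∀ (z : ℤ → Bool) (M : ℤ), (∀ k, (M ≤ k ∨ k ≤ -M) → z k = false) →
      ∀ i, (M + B ≤ i ∨ i ≤ -(M+B)) → h z i = c := by
    intro z M hzM i hi
    have h1 : h z i = h (fun j => z (j + i)) 0 := by
      have := congrFun (hshift i z) 0
      rw [zero_add] at this
      exact this.symm
    rw [h1]
    apply hball
    intro j hj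
    apply hzM
    have := hBbound j hj
    omega
  -- tails of h xs and h y2
  have tailv : ∀ i : ℤ, (1 + B ≤ i ∨ i ≤ -(1+B)) → h xs i = c := by
    apply tail
    intro k hk
    rw [hxs]
    simp only [decide_eq_false_iff_not]
    omega
  have tailw : ∀ i : ℤ, (2 + B ≤ i ∨ i ≤ -(2+B)) → h y2 i = c := by
    apply tail
    intro k hk
    rw [hy2]
    simp only [decide_eq_false_iff_not]
    omega
  -- case analysis on c
  cases hcv : c with
  | false =>
    -- v = h xs is a preimage of xs which is eventually false on both sides: impossible
    set v : ℤ → Bool := h xs with hv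
    set N : ℤ := 1 + B with hN
    have hNpos : 1 ≤ N := by omega
    have hR : ∀ i, N ≤ i → v i = false := fun i hi => by
      rw [← hcv]; exact tailv i (Or.inl (by omega))
    have hL : ∀ i, i ≤ -N → v i = false := fun i hi => by
      rw [← hcv]; exact tailv i (Or.inr (by omega))
    have keyv : ∀ j : ℤ, (j + 1 = 0) ↔
        ((v j = false ∧ v (j+1) = true ∧ v (j+2) = false) ∨
         (v j = false ∧ v (j+1) = true ∧ v (j+2) = true) ∨
         (v j = true ∧ v (j+1) = false ∧ v (j+2) = false)) := by
      intro j
      have hh := hwin v j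
      rw [fhx, hxs] at hh
      simp only [decide_eq_true_eq] at hh
      exact hh
    -- v is false on [1, ∞)
    have right : ∀ n : ℤ, n ≤ N → (n ≤ 0 ∨ (v n = false ∧ v (n+1) = false)) := by
      intro n hn
      refine Int.le_induction_down (motive := fun n _ => n ≤ 0 ∨ (v n = false ∧ v (n+1) = false)) ?_ ?_ n hn
      · exact Or.inr ⟨hR N le_rfl, hR (N+1) (by omega)⟩
      · intro n _ hP
        by_cases h0 : n - 1 ≤ 0
        · exact Or.inl h0
        · rcases hP with hP | hP
          · omega
          · refine Or.inr ⟨?_, by rw [show n-1+1 = n from by ring]; exact hP.1⟩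
            cases hvn : v (n-1) with
            | false => rfl
            | true =>
              exfalso
              have : (n-1) + 1 = 0 := (keyv (n-1)).mpr (by
                rw [show n-1+1 = n from by ring, show n-1+2 = n+1 from by ring]
                exact Or.inr (Or.inr ⟨hvn, hP.1, hP.2⟩))
              omega
    have hv1 : v 1 = false := by
      rcases right 1 (by omega) with h | h
      · omega
      · exact h.1
    have hv2 : v 2 = false := by
      rcases right 1 (by omega) with h | h
      · omega
      · exact h.2
    -- v 0 = false
    have hv0 : v 0 = false := by
      cases hvn : v 0 with
      | false => rfl
      | true =>
        exfalso
        have : (0:ℤ) + 1 = 0 := (keyv 0).mpr (by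
          rw [show (0:ℤ)+1 = 1 from by norm_num, show (0:ℤ)+2 = 2 from by norm_num]
          exact Or.inr (Or.inr ⟨hvn, hv1, hv2⟩))
        omega
    -- v (-1) = true
    have hvm1 : v (-1) = true := by
      have hk := (keyv (-1)).mp (by norm_num)
      rw [show (-1:ℤ)+1 = 0 from by ring, show (-1:ℤ)+2 = 1 from by ring] at hk
      rcases hk with ⟨_, h2, _⟩ | ⟨_, h2, _⟩ | ⟨h1, _, _⟩
      · rw [hv0] at h2; exact absurd h2 (by simp)
      · rw [hv0] at h2; exact absurd h2 (by simp)
      · exact h1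
    -- v is true on (-∞, -1]
    have left : ∀ n : ℤ, n ≤ -1 → v n = true := by
      intro n hn
      refine Int.le_induction_down (motive := fun n _ => v n = true) ?_ ?_ n hn
      · exact hvm1
      · intro n hn hP
        cases hvn : v (n-1) with
        | true => rfl
        | false =>
          exfalso
          have : (n-1) + 1 = 0 := (keyv (n-1)).mpr (by
            rw [show n-1+1 = n from by ring]
            cases hvb : v (n-1+2) with
            | false => exact Or.inl ⟨hvn, hP, rfl⟩
            | true => exact Or.inr (Or.inl ⟨hvn, hP, rfl⟩))
          omega
    have := left (-N) (by omega)
    rw [hL (-N) le_rfl] at this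
    exact absurd this (by simp)
  | true =>
    -- w = h y2 is a preimage of y2 which is eventually true on both sides: impossible
    set w : ℤ → Bool := h y2 with hw
    set N : ℤ := 2 + B with hN
    have hNpos : 2 ≤ N := by omega
    have hR : ∀ i, N ≤ i → w i = true := fun i hi => by
      rw [← hcv]; exact tailw i (Or.inl (by omega))
    have keyw : ∀ j : ℤ, (j + 1 = 0 ∨ j + 1 = 1) ↔
        ((w j = false ∧ w (j+1) = true ∧ w (j+2) = false) ∨
         (w j = false ∧ w (j+1) = true ∧ w (j+2) = true) ∨
         (w j = true ∧ w (j+1) = false ∧ w (j+2) = false)) := by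
      intro j
      have hh := hwin w j
      rw [fhy, hy2] at hh
      simp only [decide_eq_true_eq] at hh
      exact hh
    -- w is true on [1, ∞)
    have right : ∀ n : ℤ, n ≤ N → (n ≤ 0 ∨ (w n = true ∧ w (n+1) = true)) := by
      intro n hn
      refine Int.le_induction_down (motive := fun n _ => n ≤ 0 ∨ (w n = true ∧ w (n+1) = true)) ?_ ?_ n hn
      · exact Or.inr ⟨hR N le_rfl, hR (N+1) (by omega)⟩
      · intro n _ hP
        by_cases h0 : n - 1 ≤ 0
        · exact Or.inl h0
        · rcases hP with hP | hP
          · omega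
          · refine Or.inr ⟨?_, by rw [show n-1+1 = n from by ring]; exact hP.1⟩
            cases hvn : w (n-1) with
            | true => rfl
            | false =>
              exfalso
              have hor : (n-1) + 1 = 0 ∨ (n-1)+1 = 1 := (keyw (n-1)).mpr (by
                rw [show n-1+1 = n from by ring, show n-1+2 = n+1 from by ring]
                exact Or.inr (Or.inl ⟨hvn, hP.1, hP.2⟩))
              omega
    have hw1 : w 1 = true := by
      rcases right 1 (by omega) with h | h
      · omega
      · exact h.1
    have hw2 : w 2 = true := by
      rcases right 1 (by omega) with h | h
      · omega
      · exact h.2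
    -- w 0 = false
    have hw0 : w 0 = false := by
      have hk := (keyw 0).mp (Or.inr (by norm_num))
      rw [show (0:ℤ)+1 = 1 from by ring, show (0:ℤ)+2 = 2 from by ring] at hk
      rcases hk with ⟨h1, _, h3⟩ | ⟨h1, _, _⟩ | ⟨_, h2, _⟩
      · exact h1
      · exact h1
      · rw [hw1] at h2; exact absurd h2 (by simp)
    -- contradiction at center 0
    have hk := (keyw (-1)).mp (Or.inl (by norm_num))
    rw [show (-1:ℤ)+1 = 0 from by ring, show (-1:ℤ)+2 = 1 from by ring] at hk
    rcases hk with ⟨_, h2, _⟩ | ⟨_, h2, _⟩ | ⟨_, _, h3⟩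
    · rw [hw0] at h2; exact absurd h2 (by simp)
    · rw [hw0] at h2; exact absurd h2 (by simp)
    · rw [hw1] at h3; exact absurd h3 (by simp)
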